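/- (2D existence criterion) Let C: R → R be twice differentiable and 2π-periodic, and suppose the family of half-planes Π⁻(θ) = {x ∈ R² : x·(cos θ, sin θ) ≤ C(θ)} admits a proper convex contour, i.e., every line {x : x·(cos θ, sin θ) = C(θ)} supports B = ⋂_θ Π⁻(θ). Then C(θ) + C''(θ) ≥ 0 for all θ. -/

import Mathlib

open Real Filter Set

lemma second_deriv_nonneg_of_min (f : ℝ → ℝ) (θ : ℝ)
    (hf1 : ∀ x, DifferentiableAt ℝ f x)
    (hf2 : DifferentiableAt ℝ (deriv f) θ)
    (hmin : ∀ x, f θ ≤ f x) :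
    0 ≤ deriv (deriv f) θ := by
  by_contra h
  push_neg at h
  set g := deriv f with hg
  have hloc : IsLocalMin f θ := Filter.Eventually.of_forall hmin
  have hgθ : g θ = 0 := hloc.deriv_eq_zero
  have hslope : Tendsto (slope g θ) (nhdsWithin θ {θ}ᶜ) (nhds (deriv g θ)) :=
    hasDerivAt_iff_tendsto_slope.mp hf2.hasDerivAt
  have hslope' : Tendsto (slope g θ) (nhdsWithin θ (Ioi θ)) (nhds (deriv g θ)) :=
    hslope.mono_left (nhdsWithin_mono θ (fun x hx => ne_of_gt hx))
  have hev : ∀ᶠ x in nhdsWithin θ (Ioi θ), slope g θ x < 0 :=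
    hslope'.eventually (eventually_lt_nhds h)
  have hev2 : ∀ᶠ x in nhdsWithin θ (Ioi θ), g x < 0 := by
    filter_upwards [hev, self_mem_nhdsWithin] with x hx hx'
    have hxθ : 0 < x - θ := sub_pos.mpr hx'
    rw [slope_def_field] at hx
    have hdiv : g x / (x - θ) < 0 := by
      have : (g x - g θ) / (x - θ) < 0 := hx
      rwa [hgθ, sub_zero] at this
    have := mul_neg_of_neg_of_pos hdiv hxθ
    rwa [div_mul_cancel₀ _ (ne_of_gt hxθ)] at this
  obtain ⟨u, hu, hsub⟩ := mem_nhdsGT_iff_exists_Ioo_subset.mp hev2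
  set c := (θ + u) / 2 with hc
  have hθc : θ < c := by simp only [hc]; linarith [mem_Ioi.mp hu]
  have hcu : c < u := by simp only [hc]; linarith [mem_Ioi.mp hu]
  have hanti : StrictAntiOn f (Icc θ c) := by
    apply strictAntiOn_of_deriv_neg (convex_Icc θ c)
    · exact (Differentiable.continuous (fun x => hf1 x)).continuousOn
    · intro x hx
      rw [interior_Icc] at hx
      exact hsub ⟨hx.1, lt_trans hx.2 hcu⟩
  have : f c < f θ := hanti (left_mem_Icc.mpr (le_of_lt hθc)) (right_mem_Icc.mpr (le_of_lt hθc)) hθc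
  exact absurd (hmin c) (not_le.mpr this)

/-- 2D existence criterion: if every supporting line of the family of
half-planes `Π⁻(θ) = {x | x ⋅ (cos θ, sin θ) ≤ C θ}` actually touches
`B = ⋂_θ Π⁻(θ)` (a proper convex contour), then `C(θ) + C''(θ) ≥ 0`. -/
theorem stmt_18 (C : ℝ → ℝ)
    (hC1 : ∀ θ, DifferentiableAt ℝ C θ)
    (hC2 : ∀ θ, DifferentiableAt ℝ (deriv C) θ)
    (hper : Function.Periodic C (2 * π))
    (hproper : ∀ θ : ℝ,
      ∃ b ∈ ⋂ φ : ℝ, {x : ℝ × ℝ | x.1 * Real.cos φ + x.2 * Real.sin φ ≤ C φ},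
        b.1 * Real.cos θ + b.2 * Real.sin θ = C θ) :
    ∀ θ : ℝ, 0 ≤ C θ + deriv (deriv C) θ := by
  intro θ
  obtain ⟨b, hbB, hbθ⟩ := hproper θ
  simp only [Set.mem_iInter, Set.mem_setOf_eq] at hbB
  set f : ℝ → ℝ := fun φ => C φ - (b.1 * Real.cos φ + b.2 * Real.sin φ) with hf
  have hhd : ∀ x, DifferentiableAt ℝ (fun φ => b.1 * Real.cos φ + b.2 * Real.sin φ) x := by
    intro x
    exact ((Real.differentiable_cos x).const_mul b.1).add
      ((Real.differentiable_sin x).const_mul b.2)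
  have hf1 : ∀ x, DifferentiableAt ℝ f x := fun x => (hC1 x).sub (hhd x)
  have hderiv : deriv f = fun φ => deriv C φ - ((-b.1) * Real.sin φ + b.2 * Real.cos φ) := by
    funext x
    rw [hf, deriv_fun_sub (hC1 x) (hhd x), deriv_fun_add ((Real.differentiable_cos x).const_mul b.1)
      ((Real.differentiable_sin x).const_mul b.2), deriv_const_mul _ (Real.differentiable_cos x),
      deriv_const_mul _ (Real.differentiable_sin x), Real.deriv_cos, Real.deriv_sin]
    ring
  have hgd : ∀ x, DifferentiableAt ℝ (fun φ => (-b.1) * Real.sin φ + b.2 * Real.cos φ) x := by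
    intro x
    exact (((Real.differentiable_sin x).const_mul (-b.1))).add
      ((Real.differentiable_cos x).const_mul b.2)
  have hf2 : DifferentiableAt ℝ (deriv f) θ := by
    rw [hderiv]
    exact (hC2 θ).sub (hgd θ)
  have hfθ : f θ = 0 := by rw [hf]; simp [hbθ]
  have hmin : ∀ x, f θ ≤ f x := by
    intro x
    rw [hfθ, hf]
    simp only [sub_nonneg]
    exact hbB x
  have key := second_deriv_nonneg_of_min f θ hf1 hf2 hmin
  have hdd : deriv (deriv f) θ = deriv (deriv C) θ + (b.1 * Real.cos θ + b.2 * Real.sin θ) := by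
    rw [hderiv, deriv_fun_sub (hC2 θ) (hgd θ), deriv_fun_add ((Real.differentiable_sin θ).const_mul (-b.1))
      ((Real.differentiable_cos θ).const_mul b.2), deriv_const_mul _ (Real.differentiable_sin θ),
      deriv_const_mul _ (Real.differentiable_cos θ), Real.deriv_sin, Real.deriv_cos]
    ring
  rw [hdd, hbθ] at key
  linarith
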